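/- Let P be a probability distribution on the finite product type B_L × A × B_R satisfying I(B_L : B_R | A)_P = 0. Let R be a channel from A to a finite type A', and let R(P) denote the distribution on B_L × A' × B_R obtained by applying R to the A-component of P. If I(A' : B_L B_R)_{R(P)} = I(A : B_L B_R)_P, then I(B_L : B_R | A')_{R(P)} = 0. -/

import Mathlib

open Finset

/-- A probability distribution on a finite type: nonnegative and sums to 1. -/
def IsDist {X : Type*} [Fintype X] (p : X → ℝ) : Prop :=
  (∀ x, 0 ≤ p x) ∧ ∑ x, p x = 1

/-- A channel (stochastic map) from `A` to `A'`: each row `R a ·` is a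
probability distribution on `A'`. -/
def IsChannel {A A' : Type*} [Fintype A'] (R : A → A' → ℝ) : Prop :=
  (∀ a a', 0 ≤ R a a') ∧ ∀ a, ∑ a', R a a' = 1

/-- Shannon entropy with the natural logarithm.  The convention `0 log 0 = 0`
holds automatically since `Real.log 0 = 0`. -/
noncomputable def H {X : Type*} [Fintype X] (p : X → ℝ) : ℝ :=
  -∑ x, p x * Real.log (p x)

/-- Mutual information `I(X:Y)` of a joint distribution on `X × Y`:
`H(P_X) + H(P_Y) - H(P)`. -/
noncomputable def MI {X Y : Type*} [Fintype X] [Fintype Y] (p : X × Y → ℝ) : ℝ :=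
  H (fun x => ∑ y, p (x, y)) + H (fun y => ∑ x, p (x, y)) - H p

/-- Conditional mutual information `I(X:Z|Y) = I(X:YZ) - I(X:Y)` of a joint
distribution on `X × Y × Z` (conditioning on the *middle* variable). -/
noncomputable def CMI {X Y Z : Type*} [Fintype X] [Fintype Y] [Fintype Z]
    (p : X × Y × Z → ℝ) : ℝ :=
  MI p - MI (fun q : X × Y => ∑ z, p (q.1, q.2, z))

/-- Apply a channel `R : A → A'` to the first component of a joint
distribution on `A × B`. -/
noncomputable def applyFst {A A' B : Type*} [Fintype A]
    (R : A → A' → ℝ) (p : A × B → ℝ) : A' × B → ℝ :=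
  fun q => ∑ a, R a q.1 * p (a, q.2)

/-- Apply a channel `R : A → A'` to the middle component of a joint
distribution on `BL × A × BR`. -/
noncomputable def applyMid {BL A A' BR : Type*} [Fintype A]
    (R : A → A' → ℝ) (p : BL × A × BR → ℝ) : BL × A' × BR → ℝ :=
  fun q => ∑ a, R a q.2.1 * p (q.1, a, q.2.2)

/- ----------------- auxiliary lemmas ----------------- -/

lemma comm2 {α β : Type*} [Fintype α] [Fintype β] (g : α → β → ℝ) :
    ∑ a, ∑ b, g a b = ∑ b, ∑ a, g a b := Finset.sum_comm

/-- rotate the first of three sums to the end -/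
lemma sum_rot3 {α β γ : Type*} [Fintype α] [Fintype β] [Fintype γ] (g : α → β → γ → ℝ) :
    ∑ a, ∑ b, ∑ c, g a b c = ∑ b, ∑ c, ∑ a, g a b c := by
  rw [comm2 (fun a b => ∑ c, g a b c)]
  exact Finset.sum_congr rfl fun b _ => comm2 _

/-- reverse three sums -/
lemma sum_rev3 {α β γ : Type*} [Fintype α] [Fintype β] [Fintype γ] (g : α → β → γ → ℝ) :
    ∑ a, ∑ b, ∑ c, g a b c = ∑ c, ∑ b, ∑ a, g a b c := by
  rw [comm2 (fun a b => ∑ c, g a b c)]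
  rw [show (∑ b, ∑ a, ∑ c, g a b c) = ∑ b, ∑ c, ∑ a, g a b c from
    Finset.sum_congr rfl fun b _ => comm2 _]
  exact comm2 _

/-- permutation (a,b,c,d) ↦ (d,a,c,b) of four sums -/
lemma sum4a {α β γ δ : Type*} [Fintype α] [Fintype β] [Fintype γ] [Fintype δ]
    (g : α → β → γ → δ → ℝ) :
    ∑ a, ∑ b, ∑ c, ∑ d, g a b c d = ∑ d, ∑ a, ∑ c, ∑ b, g a b c d := by
  calc ∑ a, ∑ b, ∑ c, ∑ d, g a b c d
      = ∑ a, ∑ b, ∑ d, ∑ c, g a b c d :=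
        Finset.sum_congr rfl fun a _ => Finset.sum_congr rfl fun b _ => comm2 _
    _ = ∑ a, ∑ d, ∑ b, ∑ c, g a b c d :=
        Finset.sum_congr rfl fun a _ => comm2 _
    _ = ∑ d, ∑ a, ∑ b, ∑ c, g a b c d := comm2 _
    _ = ∑ d, ∑ a, ∑ c, ∑ b, g a b c d :=
        Finset.sum_congr rfl fun d _ => Finset.sum_congr rfl fun a _ => comm2 _

lemma gibbs {ι : Type*} [Fintype ι] (p q : ι → ℝ) (hp : ∀ i, 0 ≤ p i) (hq : ∀ i, 0 ≤ q i)
    (hsupp : ∀ i, q i = 0 → p i = 0) (hsum : ∑ i, q i ≤ ∑ i, p i) :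
    ∑ i, p i * Real.log (q i) ≤ ∑ i, p i * Real.log (p i) := by
  have key : ∀ i ∈ Finset.univ (α := ι),
      p i * Real.log (q i) ≤ p i * Real.log (p i) + (q i - p i) := by
    intro i _
    rcases eq_or_lt_of_le (hp i) with h | h
    · simp [← h]; exact hq i
    · have hqpos : 0 < q i := by
        rcases (hq i).eq_or_lt with h0 | h0
        · exact absurd (hsupp i h0.symm) (ne_of_gt h)
        · exact h0
      have hlog : Real.log (q i / p i) ≤ q i / p i - 1 :=
        Real.log_le_sub_one_of_pos (div_pos hqpos h)
      rw [Real.log_div hqpos.ne' h.ne'] at hlog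
      have h2 : p i * (Real.log (q i) - Real.log (p i)) ≤ p i * (q i / p i - 1) :=
        mul_le_mul_of_nonneg_left hlog h.le
      have h3 : p i * (q i / p i - 1) = q i - p i := by field_simp
      nlinarith
  have hs := Finset.sum_le_sum key
  rw [Finset.sum_add_distrib, Finset.sum_sub_distrib] at hs
  linarith

/-- Strong subadditivity in fully expanded (curried) form, with `S = ∑ p log p`
(negated entropies): `S_XY + S_YZ ≤ S_Y + S_XYZ`. -/
lemma ssa_curried {X Y Z : Type*} [Fintype X] [Fintype Y] [Fintype Z]
    (f : X → Y → Z → ℝ) (hf : ∀ x y z, 0 ≤ f x y z)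
    (hsum : ∑ x, ∑ y, ∑ z, f x y z = 1) :
    (∑ x, ∑ y, (∑ z, f x y z) * Real.log (∑ z, f x y z))
    + (∑ y, ∑ z, (∑ x, f x y z) * Real.log (∑ x, f x y z))
    ≤ (∑ y, (∑ x, ∑ z, f x y z) * Real.log (∑ x, ∑ z, f x y z))
    + (∑ x, ∑ y, ∑ z, f x y z * Real.log (f x y z)) := by
  classical
  set a : X → Y → ℝ := fun x y => ∑ z, f x y z with ha
  set b : Y → Z → ℝ := fun y z => ∑ x, f x y z with hb
  set c : Y → ℝ := fun y => ∑ x, ∑ z, f x y z with hc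
  have hanon : ∀ x y, 0 ≤ a x y := fun x y => Finset.sum_nonneg fun z _ => hf x y z
  have hbnon : ∀ y z, 0 ≤ b y z := fun y z => Finset.sum_nonneg fun x _ => hf x y z
  have hcnon : ∀ y, 0 ≤ c y := fun y => Finset.sum_nonneg fun x _ => hanon x y
  have hfa : ∀ x y z, f x y z ≤ a x y := fun x y z =>
    Finset.single_le_sum (fun z _ => hf x y z) (mem_univ z)
  have hfb : ∀ x y z, f x y z ≤ b y z := fun x y z =>
    Finset.single_le_sum (fun x _ => hf x y z) (mem_univ x)
  have hac : ∀ x y, a x y ≤ c y := fun x y =>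
    Finset.single_le_sum (fun x _ => hanon x y) (mem_univ x)
  have hcb : ∀ y, c y = ∑ z, b y z := fun y => Finset.sum_comm
  set p : X × Y × Z → ℝ := fun u => f u.1 u.2.1 u.2.2 with hpdef
  set q : X × Y × Z → ℝ := fun u => a u.1 u.2.1 * b u.2.1 u.2.2 / c u.2.1 with hqdef
  have hpnon : ∀ u, 0 ≤ p u := fun u => hf _ _ _
  have hqnon : ∀ u, 0 ≤ q u := fun u =>
    div_nonneg (mul_nonneg (hanon _ _) (hbnon _ _)) (hcnon _)
  have hqsupp : ∀ u, q u = 0 → p u = 0 := by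
    intro u h0
    by_contra hne
    have hppos : 0 < p u := (hpnon u).lt_of_ne (Ne.symm hne)
    have hapos : 0 < a u.1 u.2.1 := lt_of_lt_of_le hppos (hfa _ _ _)
    have hbpos : 0 < b u.2.1 u.2.2 := lt_of_lt_of_le hppos (hfb _ _ _)
    have hcpos : 0 < c u.2.1 := lt_of_lt_of_le hapos (hac _ _)
    have : 0 < q u := div_pos (mul_pos hapos hbpos) hcpos
    exact this.ne' h0
  have hsump : ∑ u, p u = 1 := by
    rw [Fintype.sum_prod_type]
    simpa [Fintype.sum_prod_type] using hsum
  have hsumq : ∑ u, q u ≤ ∑ u, p u := by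
    rw [hsump]
    have key : ∑ u : X × Y × Z, q u
        = ∑ y, (∑ x, a x y) * (∑ z, b y z) / c y := by
      simp only [Fintype.sum_prod_type]
      rw [Finset.sum_comm]
      refine Finset.sum_congr rfl fun y _ => ?_
      rw [Finset.sum_mul, Finset.sum_div]
      refine Finset.sum_congr rfl fun x _ => ?_
      rw [Finset.mul_sum, Finset.sum_div]
    rw [key]
    have step : ∀ y, (∑ x, a x y) * (∑ z, b y z) / c y ≤ c y := by
      intro y
      have hx : (∑ x, a x y) = c y := rfl
      rw [hx, ← hcb]
      rcases eq_or_lt_of_le (hcnon y) with h | h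
      · simp [← h]
      · rw [mul_div_assoc, div_self h.ne', mul_one]
    have hcsum : ∑ y, c y = 1 := by
      rw [show (∑ y, c y) = ∑ x, ∑ y, ∑ z, f x y z from Finset.sum_comm, hsum]
    calc ∑ y, (∑ x, a x y) * (∑ z, b y z) / c y ≤ ∑ y, c y :=
          Finset.sum_le_sum fun y _ => step y
      _ = 1 := hcsum
  have point : ∀ x y z, f x y z * Real.log (a x y * b y z / c y)
      = f x y z * Real.log (a x y) + f x y z * Real.log (b y z)
        - f x y z * Real.log (c y) := by
    intro x y z
    rcases eq_or_lt_of_le (hf x y z) with h | h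
    · simp [← h]
    · have hapos : 0 < a x y := lt_of_lt_of_le h (hfa x y z)
      have hbpos : 0 < b y z := lt_of_lt_of_le h (hfb x y z)
      have hcpos : 0 < c y := lt_of_lt_of_le hapos (hac x y)
      rw [Real.log_div (mul_pos hapos hbpos).ne' hcpos.ne',
        Real.log_mul hapos.ne' hbpos.ne']
      ring
  have hlogq : ∑ u, p u * Real.log (q u)
      = (∑ x, ∑ y, a x y * Real.log (a x y))
        + (∑ y, ∑ z, b y z * Real.log (b y z))
        - (∑ y, c y * Real.log (c y)) := by
    have e1 : ∑ u : X × Y × Z, p u * Real.log (q u)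
        = ∑ x, ∑ y, ∑ z, (f x y z * Real.log (a x y)
          + f x y z * Real.log (b y z) - f x y z * Real.log (c y)) := by
      simp only [Fintype.sum_prod_type]
      exact Finset.sum_congr rfl fun x _ => Finset.sum_congr rfl fun y _ =>
        Finset.sum_congr rfl fun z _ => point x y z
    rw [e1]
    simp only [Finset.sum_add_distrib, Finset.sum_sub_distrib]
    congr 1
    · congr 1
      · refine Finset.sum_congr rfl fun x _ => Finset.sum_congr rfl fun y _ => ?_
        rw [← Finset.sum_mul]
      · rw [Finset.sum_comm]
        refine Finset.sum_congr rfl fun y _ => ?_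
        rw [Finset.sum_comm]
        refine Finset.sum_congr rfl fun z _ => ?_
        rw [← Finset.sum_mul]
    · rw [Finset.sum_comm]
      refine Finset.sum_congr rfl fun y _ => ?_
      rw [hc]
      rw [Finset.sum_mul]
      refine Finset.sum_congr rfl fun x _ => ?_
      rw [← Finset.sum_mul]
  have hg := gibbs p q hpnon hqnon hqsupp hsumq
  have hlogp : ∑ u, p u * Real.log (p u)
      = ∑ x, ∑ y, ∑ z, f x y z * Real.log (f x y z) := by
    simp only [Fintype.sum_prod_type]
    rfl
  rw [hlogq, hlogp] at hg
  linarith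

lemma ssa {X Y Z : Type*} [Fintype X] [Fintype Y] [Fintype Z]
    (p : X × Y × Z → ℝ) (h : IsDist p) : 0 ≤ CMI p := by
  obtain ⟨hnn, hsum⟩ := h
  have main := ssa_curried (fun x y z => p (x, y, z)) (fun x y z => hnn _)
    (by simpa [Fintype.sum_prod_type] using hsum)
  simp only [CMI, MI, H, Fintype.sum_prod_type]
  linarith [main]

/-- Factorization of the entropy of a joint `s ⊗ R` through a channel. -/
lemma factor {A A' W : Type*} [Fintype A] [Fintype A'] [Fintype W]
    (R : A → A' → ℝ) (hRnn : ∀ a a', 0 ≤ R a a') (hRsum : ∀ a, ∑ a', R a a' = 1)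
    (s : W → A → ℝ) (hs : ∀ w m, 0 ≤ s w m) :
    ∑ m, ∑ w, ∑ n, (s w m * R m n) * Real.log (s w m * R m n)
    = (∑ m, ∑ w, s w m * Real.log (s w m))
      + ∑ m, (∑ w, s w m) * (∑ n, R m n * Real.log (R m n)) := by
  have point : ∀ w m n, (s w m * R m n) * Real.log (s w m * R m n)
      = (s w m * Real.log (s w m)) * R m n + s w m * (R m n * Real.log (R m n)) := by
    intro w m n
    rcases eq_or_lt_of_le (hs w m) with h | h
    · simp [← h]
    · rcases eq_or_lt_of_le (hRnn m n) with h' | h'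
      · simp [← h']
      · rw [Real.log_mul h.ne' h'.ne']; ring
  rw [← Finset.sum_add_distrib]
  refine Finset.sum_congr rfl fun m _ => ?_
  calc ∑ w, ∑ n, (s w m * R m n) * Real.log (s w m * R m n)
      = ∑ w, ∑ n, ((s w m * Real.log (s w m)) * R m n
          + s w m * (R m n * Real.log (R m n))) :=
        Finset.sum_congr rfl fun w _ => Finset.sum_congr rfl fun n _ => point w m n
    _ = ∑ w, (s w m * Real.log (s w m) + s w m * (∑ n, R m n * Real.log (R m n))) := by
        refine Finset.sum_congr rfl fun w _ => ?_
        rw [Finset.sum_add_distrib, ← Finset.mul_sum, ← Finset.mul_sum, hRsum, mul_one]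
    _ = (∑ w, s w m * Real.log (s w m))
        + (∑ w, s w m) * (∑ n, R m n * Real.log (R m n)) := by
        rw [Finset.sum_add_distrib, Finset.sum_mul]

theorem stmt_1 {BL A BR A' : Type*} [Fintype BL] [Fintype A] [Fintype BR] [Fintype A']
    (P : BL × A × BR → ℝ) (hP : IsDist P)
    (R : A → A' → ℝ) (hR : IsChannel R)
    (hMarkov : CMI P = 0)
    (hpres : MI (fun q : A' × (BL × BR) => applyMid R P (q.2.1, q.1, q.2.2)) =
             MI (fun q : A × (BL × BR) => P (q.2.1, q.1, q.2.2))) :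
    CMI (applyMid R P) = 0 := by
  obtain ⟨hPnn, hPsum⟩ := hP
  obtain ⟨hRnn, hRsum⟩ := hR
  -- total sum of the pushed-forward distribution
  have hPsum' : ∑ l, ∑ m, ∑ t, P (l, m, t) = 1 := by
    simpa [Fintype.sum_prod_type] using hPsum
  have hrow : ∀ (m : A) (x : ℝ), ∑ n, x * R m n = x := by
    intro m x; rw [← Finset.mul_sum, hRsum, mul_one]
  have hrow' : ∀ (m : A) (x : ℝ), ∑ n, R m n * x = x := by
    intro m x; rw [← Finset.sum_mul, hRsum, one_mul]
  have hQdist : IsDist (applyMid R P) := by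
    constructor
    · intro u
      exact Finset.sum_nonneg fun m _ => mul_nonneg (hRnn _ _) (hPnn _)
    · unfold applyMid
      rw [show (∑ u : BL × A' × BR, ∑ m, R m u.2.1 * P (u.1, m, u.2.2))
          = ∑ l, ∑ n, ∑ t, ∑ m, R m n * P (l, m, t) by
        simp [Fintype.sum_prod_type]]
      calc ∑ l, ∑ n, ∑ t, ∑ m, R m n * P (l, m, t)
          = ∑ l, ∑ t, ∑ m, ∑ n, R m n * P (l, m, t) :=
            Finset.sum_congr rfl fun l _ => sum_rot3 _
        _ = ∑ l, ∑ t, ∑ m, P (l, m, t) := by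
            refine Finset.sum_congr rfl fun l _ => Finset.sum_congr rfl fun t _ =>
              Finset.sum_congr rfl fun m _ => hrow' m _
        _ = ∑ l, ∑ m, ∑ t, P (l, m, t) :=
            Finset.sum_congr rfl fun l _ => comm2 _
        _ = 1 := hPsum'
  -- SSA instance 1 : 0 ≤ CMI (applyMid R P)
  have hS1 := ssa (applyMid R P) hQdist
  -- SSA instance 2 : I(L : A | A' BR) ≥ 0  (X = BL, Y = A'×BR, Z = A)
  have hsum2 : ∑ l, ∑ u : A' × BR, ∑ m, P (l, m, u.2) * R m u.1 = 1 := by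
    rw [show (∑ l, ∑ u : A' × BR, ∑ m, P (l, m, u.2) * R m u.1)
        = ∑ l, ∑ n, ∑ t, ∑ m, P (l, m, t) * R m n by
      simp [Fintype.sum_prod_type]]
    calc ∑ l, ∑ n, ∑ t, ∑ m, P (l, m, t) * R m n
        = ∑ l, ∑ t, ∑ m, ∑ n, P (l, m, t) * R m n :=
          Finset.sum_congr rfl fun l _ => sum_rot3 _
      _ = ∑ l, ∑ t, ∑ m, P (l, m, t) := by
          refine Finset.sum_congr rfl fun l _ => Finset.sum_congr rfl fun t _ =>
            Finset.sum_congr rfl fun m _ => hrow m _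
      _ = ∑ l, ∑ m, ∑ t, P (l, m, t) :=
          Finset.sum_congr rfl fun l _ => comm2 _
      _ = 1 := hPsum'
  have hS2 := ssa_curried (fun (l : BL) (u : A' × BR) (m : A) => P (l, m, u.2) * R m u.1)
    (fun l u m => mul_nonneg (hPnn _) (hRnn _ _)) hsum2
  simp only [Fintype.sum_prod_type] at hS2
  -- SSA instance 3 : I(A : BR | BL A') ≥ 0  (X = A, Y = BL×A', Z = BR)
  have hsum3 : ∑ m, ∑ u : BL × A', ∑ t, P (u.1, m, t) * R m u.2 = 1 := by
    rw [show (∑ m, ∑ u : BL × A', ∑ t, P (u.1, m, t) * R m u.2)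
        = ∑ m, ∑ l, ∑ n, ∑ t, P (l, m, t) * R m n by
      simp [Fintype.sum_prod_type]]
    calc ∑ m, ∑ l, ∑ n, ∑ t, P (l, m, t) * R m n
        = ∑ m, ∑ l, ∑ t, ∑ n, P (l, m, t) * R m n :=
          Finset.sum_congr rfl fun m _ => Finset.sum_congr rfl fun l _ => comm2 _
      _ = ∑ m, ∑ l, ∑ t, P (l, m, t) := by
          refine Finset.sum_congr rfl fun m _ => Finset.sum_congr rfl fun l _ =>
            Finset.sum_congr rfl fun t _ => hrow m _
      _ = ∑ l, ∑ m, ∑ t, P (l, m, t) := comm2 _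
      _ = 1 := hPsum'
  have hS3 := ssa_curried (fun (m : A) (u : BL × A') (t : BR) => P (u.1, m, t) * R m u.2)
    (fun m u t => mul_nonneg (hPnn _) (hRnn _ _)) hsum3
  simp only [Fintype.sum_prod_type] at hS3
  -- now unfold everything
  simp only [CMI, MI, H, applyMid, Fintype.sum_prod_type] at hMarkov hpres hS1 ⊢
  -- glue equalities
  have G1 : (∑ l, ∑ t, (∑ n, ∑ m, R m n * P (l, m, t)) * Real.log (∑ n, ∑ m, R m n * P (l, m, t)))
      = ∑ l, ∑ t, (∑ m, P (l, m, t)) * Real.log (∑ m, P (l, m, t)) := by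
    refine Finset.sum_congr rfl fun l _ => Finset.sum_congr rfl fun t _ => ?_
    rw [show (∑ n, ∑ m, R m n * P (l, m, t)) = ∑ m, P (l, m, t) from by
      rw [comm2]; exact Finset.sum_congr rfl fun m _ => hrow' m _]
  have G2 : (∑ m, ∑ l, ∑ t, P (l, m, t) * Real.log (P (l, m, t)))
      = ∑ l, ∑ m, ∑ t, P (l, m, t) * Real.log (P (l, m, t)) := comm2 _
  have G3 : (∑ n, ∑ l, ∑ t, (∑ m, R m n * P (l, m, t)) * Real.log (∑ m, R m n * P (l, m, t)))
      = ∑ l, ∑ n, ∑ t, (∑ m, R m n * P (l, m, t)) * Real.log (∑ m, R m n * P (l, m, t)) := comm2 _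
  have G4 : (∑ m, ∑ l, (∑ t, P (l, m, t)) * Real.log (∑ t, P (l, m, t)))
      = ∑ l, ∑ m, (∑ t, P (l, m, t)) * Real.log (∑ t, P (l, m, t)) := comm2 _
  have E1 : (∑ l, ∑ n, ∑ t, (∑ m, P (l, m, t) * R m n) * Real.log (∑ m, P (l, m, t) * R m n))
      = ∑ l, ∑ n, ∑ t, (∑ m, R m n * P (l, m, t)) * Real.log (∑ m, R m n * P (l, m, t)) := by
    refine Finset.sum_congr rfl fun l _ => Finset.sum_congr rfl fun n _ =>
      Finset.sum_congr rfl fun t _ => ?_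
    rw [show (∑ m, P (l, m, t) * R m n) = ∑ m, R m n * P (l, m, t) from
      Finset.sum_congr rfl fun m _ => mul_comm _ _]
  have E2 : (∑ n, ∑ t, (∑ l, ∑ m, P (l, m, t) * R m n) * Real.log (∑ l, ∑ m, P (l, m, t) * R m n))
      = ∑ n, ∑ t, (∑ l, ∑ m, R m n * P (l, m, t)) * Real.log (∑ l, ∑ m, R m n * P (l, m, t)) := by
    refine Finset.sum_congr rfl fun n _ => Finset.sum_congr rfl fun t _ => ?_
    rw [show (∑ l, ∑ m, P (l, m, t) * R m n) = ∑ l, ∑ m, R m n * P (l, m, t) from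
      Finset.sum_congr rfl fun l _ => Finset.sum_congr rfl fun m _ => mul_comm _ _]
  have E3 : (∑ n, ∑ t, ∑ m, (∑ l, P (l, m, t) * R m n) * Real.log (∑ l, P (l, m, t) * R m n))
      = (∑ m, ∑ t, (∑ l, P (l, m, t)) * Real.log (∑ l, P (l, m, t)))
        + ∑ m, (∑ l, ∑ t, P (l, m, t)) * (∑ n, R m n * Real.log (R m n)) := by
    have step1 : (∑ n, ∑ t, ∑ m, (∑ l, P (l, m, t) * R m n) * Real.log (∑ l, P (l, m, t) * R m n))
        = ∑ n, ∑ t, ∑ m, ((∑ l, P (l, m, t)) * R m n) * Real.log ((∑ l, P (l, m, t)) * R m n) := by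
      refine Finset.sum_congr rfl fun n _ => Finset.sum_congr rfl fun t _ =>
        Finset.sum_congr rfl fun m _ => ?_
      rw [← Finset.sum_mul]
    rw [step1, sum_rev3 (fun n t m => ((∑ l, P (l, m, t)) * R m n) * Real.log ((∑ l, P (l, m, t)) * R m n)),
      factor R hRnn hRsum (fun t m => ∑ l, P (l, m, t))
        (fun t m => Finset.sum_nonneg fun l _ => hPnn _)]
    congr 1
    refine Finset.sum_congr rfl fun m _ => ?_
    rw [show (∑ t, ∑ l, P (l, m, t)) = ∑ l, ∑ t, P (l, m, t) from comm2 _]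
  have F : (∑ m, ∑ l, ∑ t, ∑ n, P (l, m, t) * R m n * Real.log (P (l, m, t) * R m n))
      = (∑ m, ∑ l, ∑ t, P (l, m, t) * Real.log (P (l, m, t)))
        + ∑ m, (∑ l, ∑ t, P (l, m, t)) * (∑ n, R m n * Real.log (R m n)) := by
    have := factor R hRnn hRsum (fun (w : BL × BR) m => P (w.1, m, w.2)) (fun w m => hPnn _)
    simpa [Fintype.sum_prod_type] using this
  have E4 : (∑ l, ∑ n, ∑ t, ∑ m, P (l, m, t) * R m n * Real.log (P (l, m, t) * R m n))
      = ∑ m, ∑ l, ∑ t, ∑ n, P (l, m, t) * R m n * Real.log (P (l, m, t) * R m n) :=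
    sum4a _
  have E7 : (∑ m, ∑ l, ∑ n, ∑ t, P (l, m, t) * R m n * Real.log (P (l, m, t) * R m n))
      = ∑ m, ∑ l, ∑ t, ∑ n, P (l, m, t) * R m n * Real.log (P (l, m, t) * R m n) :=
    Finset.sum_congr rfl fun m _ => Finset.sum_congr rfl fun l _ => comm2 _
  have E5 : (∑ m, ∑ l, ∑ n, (∑ t, P (l, m, t) * R m n) * Real.log (∑ t, P (l, m, t) * R m n))
      = (∑ m, ∑ l, (∑ t, P (l, m, t)) * Real.log (∑ t, P (l, m, t)))
        + ∑ m, (∑ l, ∑ t, P (l, m, t)) * (∑ n, R m n * Real.log (R m n)) := by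
    have step1 : (∑ m, ∑ l, ∑ n, (∑ t, P (l, m, t) * R m n) * Real.log (∑ t, P (l, m, t) * R m n))
        = ∑ m, ∑ l, ∑ n, ((∑ t, P (l, m, t)) * R m n) * Real.log ((∑ t, P (l, m, t)) * R m n) := by
      refine Finset.sum_congr rfl fun m _ => Finset.sum_congr rfl fun l _ =>
        Finset.sum_congr rfl fun n _ => ?_
      rw [← Finset.sum_mul]
    rw [step1, factor R hRnn hRsum (fun l m => ∑ t, P (l, m, t))
      (fun l m => Finset.sum_nonneg fun t _ => hPnn _)]
  have E6 : (∑ l, ∑ n, (∑ m, ∑ t, P (l, m, t) * R m n) * Real.log (∑ m, ∑ t, P (l, m, t) * R m n))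
      = ∑ l, ∑ n, (∑ t, ∑ m, R m n * P (l, m, t)) * Real.log (∑ t, ∑ m, R m n * P (l, m, t)) := by
    refine Finset.sum_congr rfl fun l _ => Finset.sum_congr rfl fun n _ => ?_
    rw [show (∑ m, ∑ t, P (l, m, t) * R m n) = ∑ t, ∑ m, R m n * P (l, m, t) from by
      rw [comm2]
      exact Finset.sum_congr rfl fun t _ => Finset.sum_congr rfl fun m _ => mul_comm _ _]
  rw [E1, E2, E3, E4, F, G2] at hS2
  rw [E5, E1, E6, E7, F, G2, G4] at hS3
  rw [G1, G2, G3] at hpres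
  linarith [hMarkov, hpres, hS1, hS2, hS3]
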